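/- Suppose 𝒦(Σ) ∩ 𝒴 = {0}. Then the reachable set of the convex set-valued map F equals the strongly reachable subspace: R(F) = 𝒯*(Σ). -/
import Mathlib


open Pointwise

/-- `ℓ`-fold iterate of a set-valued map: `SIter F ℓ x = F^ℓ(x)`. -/
def SIter {E : Type*} (F : E → Set E) : ℕ → E → Set E
  | 0, x => {x}
  | n + 1, x => ⋃ y ∈ SIter F n x, F y

/-- `X(F)`: initial states of infinite solutions of `x_{k+1} ∈ F(x_k)`. -/
def XSet {E : Type*} (F : E → Set E) : Set E :=
  {x | ∃ f : ℕ → E, f 0 = x ∧ ∀ k, f (k + 1) ∈ F (f k)}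

/-- `R(F) = ⋃_{ℓ ≥ 1} F^ℓ(0)`. -/
def RSet {E : Type*} [Zero E] (F : E → Set E) : Set E :=
  ⋃ ℓ ∈ {ℓ : ℕ | 1 ≤ ℓ}, SIter F ℓ 0

/-- The set-valued map `F(x) = Ax + B D^{-1}(𝒴 − Cx)` of the constrained system `(Σ,𝒴)`. -/
def Fmap {n m s : ℕ} (A : Matrix (Fin n) (Fin n) ℝ) (B : Matrix (Fin n) (Fin m) ℝ)
    (C : Matrix (Fin s) (Fin n) ℝ) (D : Matrix (Fin s) (Fin m) ℝ)
    (Y : Set (Fin s → ℝ)) : (Fin n → ℝ) → Set (Fin n → ℝ) :=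
  fun x => {z | ∃ u : Fin m → ℝ, C.mulVec x + D.mulVec u ∈ Y ∧ z = A.mulVec x + B.mulVec u}

/-- The strongly reachable subspace `𝒯*(Σ)`: states reachable from `0` with the output
kept identically zero along the way. -/
def Tstar {n m s : ℕ} (A : Matrix (Fin n) (Fin n) ℝ) (B : Matrix (Fin n) (Fin m) ℝ)
    (C : Matrix (Fin s) (Fin n) ℝ) (D : Matrix (Fin s) (Fin m) ℝ) : Set (Fin n → ℝ) :=
  RSet (Fmap A B C D ({0} : Set (Fin s → ℝ)))

/-- The weakly unobservable subspace `𝒱*(Σ)`: initial states for which an input exists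
making the output identically zero. -/
def Vstar {n m s : ℕ} (A : Matrix (Fin n) (Fin n) ℝ) (B : Matrix (Fin n) (Fin m) ℝ)
    (C : Matrix (Fin s) (Fin n) ℝ) (D : Matrix (Fin s) (Fin m) ℝ) : Set (Fin n → ℝ) :=
  XSet (Fmap A B C D ({0} : Set (Fin s → ℝ)))

/-- `𝒦(Σ) = im D + C 𝒯*(Σ)`. -/
def Kset {n m s : ℕ} (A : Matrix (Fin n) (Fin n) ℝ) (B : Matrix (Fin n) (Fin m) ℝ)
    (C : Matrix (Fin s) (Fin n) ℝ) (D : Matrix (Fin s) (Fin m) ℝ) : Set (Fin s → ℝ) :=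
  {y | ∃ (u : Fin m → ℝ) (t : Fin n → ℝ), t ∈ Tstar A B C D ∧ y = D.mulVec u + C.mulVec t}

/-- The image `im [C D]`. -/
def CDrange {n m s : ℕ} (C : Matrix (Fin s) (Fin n) ℝ) (D : Matrix (Fin s) (Fin m) ℝ) :
    Set (Fin s → ℝ) :=
  Set.range (fun p : (Fin n → ℝ) × (Fin m → ℝ) => C.mulVec p.1 + D.mulVec p.2)

lemma zero_mem_Tstar {n m s : ℕ} (A : Matrix (Fin n) (Fin n) ℝ) (B : Matrix (Fin n) (Fin m) ℝ)
    (C : Matrix (Fin s) (Fin n) ℝ) (D : Matrix (Fin s) (Fin m) ℝ) :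
    (0 : Fin n → ℝ) ∈ Tstar A B C D := by
  refine Set.mem_biUnion (show 1 ∈ {ℓ : ℕ | 1 ≤ ℓ} from Set.mem_setOf.mpr (le_refl 1)) ?_
  simp only [SIter, Set.mem_iUnion, Set.mem_singleton_iff]
  exact ⟨0, rfl, 0, by simp [Matrix.mulVec_zero], by simp [Matrix.mulVec_zero]⟩

lemma siter_mem_Tstar {n m s : ℕ} {A : Matrix (Fin n) (Fin n) ℝ} {B : Matrix (Fin n) (Fin m) ℝ}
    {C : Matrix (Fin s) (Fin n) ℝ} {D : Matrix (Fin s) (Fin m) ℝ} {ℓ : ℕ} {x : Fin n → ℝ}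
    (h : x ∈ SIter (Fmap A B C D ({0} : Set (Fin s → ℝ))) ℓ 0) : x ∈ Tstar A B C D := by
  cases ℓ with
  | zero => simp only [SIter, Set.mem_singleton_iff] at h; subst h; exact zero_mem_Tstar A B C D
  | succ k => exact Set.mem_biUnion (show 1 ≤ k + 1 from Nat.succ_le_succ (Nat.zero_le k)) h

/-- If `𝒦(Σ) ∩ 𝒴 = {0}`, then `R(F) = 𝒯*(Σ)`. -/
theorem stmt10 {n m s : ℕ} (A : Matrix (Fin n) (Fin n) ℝ) (B : Matrix (Fin n) (Fin m) ℝ)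
    (C : Matrix (Fin s) (Fin n) ℝ) (D : Matrix (Fin s) (Fin m) ℝ)
    (Y : Set (Fin s → ℝ)) (hY : Convex ℝ Y) (h0Y : (0 : Fin s → ℝ) ∈ Y)
    (hsolid : (interior (Y ∩ CDrange C D)).Nonempty)
    (hK : Kset A B C D ∩ Y = {0}) :
    RSet (Fmap A B C D Y) = Tstar A B C D := by
  have hmono : ∀ ℓ, SIter (Fmap A B C D ({0} : Set (Fin s → ℝ))) ℓ 0 ⊆
      SIter (Fmap A B C D Y) ℓ 0 := by
    intro ℓ
    induction ℓ with
    | zero => exact le_refl _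
    | succ k ih =>
      intro z hz
      simp only [SIter, Set.mem_iUnion] at hz ⊢
      obtain ⟨y, hy, u, hu, hzu⟩ := hz
      exact ⟨y, ih hy, u, by rw [Set.mem_singleton_iff] at hu; rw [hu]; exact h0Y, hzu⟩
  have hsub : ∀ ℓ, SIter (Fmap A B C D Y) ℓ 0 ⊆
      SIter (Fmap A B C D ({0} : Set (Fin s → ℝ))) ℓ 0 := by
    intro ℓ
    induction ℓ with
    | zero => exact le_refl _
    | succ k ih =>
      intro z hz
      simp only [SIter, Set.mem_iUnion] at hz ⊢
      obtain ⟨y, hy, u, hu, hzu⟩ := hz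
      have hyT : y ∈ Tstar A B C D := siter_mem_Tstar (ih hy)
      have hmem : C.mulVec y + D.mulVec u ∈ Kset A B C D ∩ Y :=
        ⟨⟨u, y, hyT, (add_comm _ _)⟩, hu⟩
      rw [hK] at hmem
      exact ⟨y, ih hy, u, hmem, hzu⟩
  ext z
  constructor
  · rintro hz
    obtain ⟨ℓ, hℓ, hzℓ⟩ := Set.mem_iUnion₂.mp hz
    exact Set.mem_biUnion hℓ (hsub ℓ hzℓ)
  · rintro hz
    obtain ⟨ℓ, hℓ, hzℓ⟩ := Set.mem_iUnion₂.mp hz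
    exact Set.mem_biUnion hℓ (hmono ℓ hzℓ)
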